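/- A decorated reciprocity graph (Ω, f, g, λ) at the prime 2 is Rado up to scaling if and only if it is weakly Rado. -/

import Mathlib

/-!
Statement 10: A decorated reciprocity graph `(Ω, f, g, λ)` at the prime 2 (relative
to a fixed isomorphism `log₂ : 1 + 4ℤ₂ → ℤ₂`) is Rado up to scaling if and only if
it is weakly Rado.

Residues mod `2^n` are encoded as natural numbers `< 2^n`; an element of
`(ℤ/2^n)^×` is a natural number `< 2^n` not divisible by `2`.  The isomorphism
`log₂` is encoded by the function `lg : ℤ₂ → ℤ₂`, `lg x = log₂ (1 + 4x)`.
-/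

noncomputable section

open scoped Classical ENat

/-- `lg` encodes a (topological) group isomorphism `log₂ : 1 + 4ℤ₂ ≃ ℤ₂`
via `lg x = log₂ (1 + 4 x)` (note `(1+4x)(1+4y) = 1 + 4(x + y + 4xy)`). -/
structure IsLogIso2 (lg : ℤ_[2] → ℤ_[2]) : Prop where
  bijective : Function.Bijective lg
  map_mul : ∀ x y : ℤ_[2], lg (x + y + 4 * x * y) = lg x + lg y
  continuous : Continuous lg

/-- The value of `log₂ (1 + a·2^n) mod 2^n`, as a natural number `< 2^n`
(for `n ≥ 2`). -/
def logVal2 (lg : ℤ_[2] → ℤ_[2]) (n : ℕ) (a : ℤ_[2]) : ℕ :=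
  (PadicInt.toZModPow n (lg (a * (2 : ℤ_[2]) ^ (n - 2)))).val

/-- The raw data of a decorated graph at 2: a vertex set `Ω`, the function
`f : Ω → ℤ_{≥1} ∪ {∞}`, the two distinguished vertices `v1 = v₂(1)`,
`v2 = v₂(2)`, the decoration `g` and the labeling `lab`. -/
structure GraphData2 where
  Ω : Type
  f : Ω → ℕ∞
  v1 : Ω
  v2 : Ω
  g : Ω → ℕ
  lab : Ω → Ω → ℕ

namespace GraphData2

variable (D : GraphData2)

/-- `f(v,w) = min (f v) (f w)`, as a natural number. -/
def fm (v w : D.Ω) : ℕ := (min (D.f v) (D.f w)).toNat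

/-- The pairs `(v,w)` carrying a label: distinct, not both in the fiber over `∞`. -/
def Rel (v w : D.Ω) : Prop := v ≠ w ∧ ¬ (D.f v = ⊤ ∧ D.f w = ⊤)

/-- `D` is a decorated graph at the prime 2, for the logarithm `lg`. -/
def IsDecorated (lg : ℤ_[2] → ℤ_[2]) : Prop :=
  Countable D.Ω ∧ Infinite D.Ω ∧
  (∀ v, 1 ≤ D.f v) ∧
  D.v1 ≠ D.v2 ∧ D.f D.v1 = ⊤ ∧ D.f D.v2 = ⊤ ∧
  (∀ v, D.f v = ⊤ → v = D.v1 ∨ v = D.v2) ∧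
  (∀ v, D.f v ≠ ⊤ → D.g v < 2 ^ (D.f v).toNat ∧ ¬ 2 ∣ D.g v) ∧
  (∀ v w, D.Rel v w → D.lab v w < 2 ^ D.fm v w) ∧
  (∀ w, D.f w ≠ ⊤ → (D.lab D.v2 w % 2 = 1 ↔ D.f w = 1)) ∧
  (∀ w, D.f w ≠ ⊤ → 2 ≤ D.f w →
    D.lab D.v1 w = logVal2 lg (D.f w).toNat (D.g w : ℤ_[2])) ∧
  (∀ w, D.f w ≠ ⊤ → D.lab w D.v1 = 0 ∧ D.lab w D.v2 = 0)

/-- `D` is a decorated reciprocity graph: it moreover satisfies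
`λ(v,w) ≡ λ(w,v) + λ(v₂(2),v)·λ(v₂(2),w) (mod 2)` for `v, w ∈ Ω_fin`. -/
def IsRecip (lg : ℤ_[2] → ℤ_[2]) : Prop :=
  D.IsDecorated lg ∧
  ∀ v w, D.f v ≠ ⊤ → D.f w ≠ ⊤ → v ≠ w →
    D.lab v w % 2 = (D.lab w v + D.lab D.v2 v * D.lab D.v2 w) % 2

/-- `D` is Rado. -/
def IsRado (lg : ℤ_[2] → ℤ_[2]) : Prop :=
  ∀ S : Finset D.Ω, D.v1 ∈ S → D.v2 ∈ S →
  ∀ n : ℕ, 1 ≤ n →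
  ∀ α : ℕ, α < 2 ^ n → ¬ 2 ∣ α →
  ∀ μ₁ μ₂ : D.Ω → ℕ,
    (∀ s ∈ S, μ₁ s < 2 ^ (min (n : ℕ∞) (D.f s)).toNat) →
    (∀ s ∈ S, μ₂ s < 2 ^ (min (n : ℕ∞) (D.f s)).toNat) →
    (n = 1 ↔ μ₂ D.v2 % 2 = 1) →
    (2 ≤ n → μ₂ D.v1 = logVal2 lg n (α : ℤ_[2]) ∧ μ₁ D.v1 = 0 ∧ μ₁ D.v2 = 0) →
    (∀ s ∈ S, s ≠ D.v1 → s ≠ D.v2 →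
      μ₁ s % 2 = (μ₂ s + D.lab D.v2 s * μ₂ D.v2) % 2) →
    ∃ v : D.Ω, v ∉ S ∧ D.f v = (n : ℕ∞) ∧ D.g v = α ∧
      ∀ s ∈ S, D.lab v s = μ₁ s ∧ D.lab s v = μ₂ s

/-- `D` is weakly Rado. -/
def IsWeaklyRado (lg : ℤ_[2] → ℤ_[2]) : Prop :=
  ∀ S : Finset D.Ω, D.v1 ∈ S → D.v2 ∈ S →
  ∀ n : ℕ, 1 ≤ n →
  ∀ α : ℕ, α < 2 ^ n → ¬ 2 ∣ α →
  ∀ μ₁ μ₂ : D.Ω → ℕ,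
    (∀ s ∈ S, μ₁ s < 2 ^ (min (n : ℕ∞) (D.f s)).toNat) →
    (∀ s ∈ S, μ₂ s < 2 ^ (min (n : ℕ∞) (D.f s)).toNat) →
    (n = 1 ↔ μ₂ D.v2 % 2 = 1) →
    (2 ≤ n → μ₂ D.v1 = logVal2 lg n (α : ℤ_[2]) ∧ μ₁ D.v1 = 0 ∧ μ₁ D.v2 = 0) →
    (∀ s ∈ S, s ≠ D.v1 → s ≠ D.v2 →
      μ₁ s % 2 = (μ₂ s + D.lab D.v2 s * μ₂ D.v2) % 2) →
    ∃ v : D.Ω, v ∉ S ∧ ∃ γ : ℕ, γ < 2 ^ n ∧ ¬ 2 ∣ γ ∧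
      D.f v = (n : ℕ∞) ∧ D.g v = α ∧
      ∀ s ∈ S, D.lab v s = (γ * μ₁ s) % 2 ^ (min (n : ℕ∞) (D.f s)).toNat ∧
        D.lab s v = μ₂ s

/-- The scaling `γ_• · λ` of the labeling of `D`. -/
def scale (γ : D.Ω → ℕ) : GraphData2 where
  Ω := D.Ω
  f := D.f
  v1 := D.v1
  v2 := D.v2
  g := D.g
  lab := fun v w => if D.f v = ⊤ then D.lab v w else (γ v * D.lab v w) % 2 ^ D.fm v w

/-- `D` is Rado up to scaling: some scaling `γ_• · λ` of its labeling by units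
`γ_v ∈ (ℤ/2^{f v})^×` is Rado. -/
def IsRadoUpToScaling (lg : ℤ_[2] → ℤ_[2]) : Prop :=
  ∃ γ : D.Ω → ℕ, (∀ v, D.f v ≠ ⊤ → γ v < 2 ^ (D.f v).toNat ∧ ¬ 2 ∣ γ v) ∧
    (D.scale γ).IsRado lg

end GraphData2

/-! ### Auxiliary lemmas for statement10 -/

section St10Helpers

noncomputable def inv2 (m γ : ℕ) : ℕ :=
  haveI : NeZero (2 ^ m) := ⟨pow_ne_zero m two_ne_zero⟩
  ((γ : ZMod (2 ^ m))⁻¹).val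

lemma inv2_spec (m γ : ℕ) (hm : 1 ≤ m) (hγ : ¬ 2 ∣ γ) :
    inv2 m γ < 2 ^ m ∧ ¬ 2 ∣ inv2 m γ ∧ γ * inv2 m γ ≡ 1 [MOD 2 ^ m] := by
  haveI : NeZero (2 ^ m) := ⟨pow_ne_zero m two_ne_zero⟩
  have hodd : Odd γ := Nat.odd_iff.mpr (Nat.two_dvd_ne_zero.mp hγ)
  have hcop : Nat.Coprime γ (2 ^ m) := Nat.Coprime.pow_right m (Nat.coprime_two_right.mpr hodd)
  have hu : IsUnit (γ : ZMod (2 ^ m)) := (ZMod.isUnit_iff_coprime γ (2 ^ m)).mpr hcop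
  have hmul : (γ : ZMod (2 ^ m)) * (γ : ZMod (2 ^ m))⁻¹ = 1 := ZMod.mul_inv_of_unit _ hu
  have hcast : ((inv2 m γ : ℕ) : ZMod (2 ^ m)) = (γ : ZMod (2 ^ m))⁻¹ :=
    ZMod.natCast_rightInverse _
  refine ⟨ZMod.val_lt _, ?_, ?_⟩
  · have hu' : IsUnit ((γ : ZMod (2 ^ m))⁻¹) :=
      IsUnit.of_mul_eq_one _ (by rw [mul_comm]; exact hmul)
    obtain ⟨u, hu2⟩ := hu'
    have hval : Nat.Coprime (inv2 m γ) (2 ^ m) := by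
      have := ZMod.val_coe_unit_coprime u
      rw [hu2] at this
      exact this
    intro hdvd
    have h2 : (2 : ℕ) ∣ 2 ^ m := dvd_pow_self 2 (by omega)
    have := Nat.dvd_gcd hdvd h2
    rw [hval] at this
    omega
  · have : ((γ * inv2 m γ : ℕ) : ZMod (2 ^ m)) = ((1 : ℕ) : ZMod (2 ^ m)) := by
      push_cast
      rw [hcast]
      exact hmul
    exact (ZMod.natCast_eq_natCast_iff _ _ _).mp this

lemma mod_helper {a b n m x : ℕ} (hab : a * b ≡ 1 [MOD 2 ^ n]) (hmn : m ≤ n) (hx : x < 2 ^ m) :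
    (a * (b * x % 2 ^ m)) % 2 ^ m = x := by
  have h1 : a * b ≡ 1 [MOD 2 ^ m] := hab.of_dvd (pow_dvd_pow 2 hmn)
  have h2 : a * (b * x % 2 ^ m) ≡ x [MOD 2 ^ m] := by
    calc a * (b * x % 2 ^ m) ≡ a * (b * x) [MOD 2 ^ m] :=
          Nat.ModEq.mul_left a (Nat.mod_modEq _ _)
      _ = a * b * x := by ring
      _ ≡ 1 * x [MOD 2 ^ m] := h1.mul_right x
      _ = x := one_mul x
  calc (a * (b * x % 2 ^ m)) % 2 ^ m = x % 2 ^ m := h2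
    _ = x := Nat.mod_eq_of_lt hx

lemma parity_helper {c m : ℕ} (x : ℕ) (hm : 1 ≤ m) (hc : ¬ 2 ∣ c) :
    (c * x) % 2 ^ m % 2 = x % 2 := by
  have h1 : (c * x) % 2 ^ m ≡ c * x [MOD 2] :=
    (Nat.mod_modEq _ _).of_dvd (dvd_pow_self 2 (by omega))
  have h2 : c * x ≡ 1 * x [MOD 2] :=
    Nat.ModEq.mul_right x (by have := Nat.two_dvd_ne_zero.mp hc; show c % 2 = 1 % 2; omega)
  calc (c * x) % 2 ^ m % 2 = (c * x) % 2 := h1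
    _ = (1 * x) % 2 := h2
    _ = x % 2 := by rw [one_mul]

lemma cancel_helper {c m x y : ℕ} (hc : ¬ 2 ∣ c) (hx : x < 2 ^ m) (hy : y < 2 ^ m)
    (h : c * x % 2 ^ m = c * y % 2 ^ m) : x = y := by
  have hodd : Odd c := Nat.odd_iff.mpr (Nat.two_dvd_ne_zero.mp hc)
  have hcop : Nat.gcd (2 ^ m) c = 1 :=
    Nat.Coprime.symm (Nat.Coprime.pow_right m (Nat.coprime_two_right.mpr hodd))
  have := Nat.ModEq.cancel_left_of_coprime hcop (h : c * x ≡ c * y [MOD 2 ^ m])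
  calc x = x % 2 ^ m := (Nat.mod_eq_of_lt hx).symm
    _ = y % 2 ^ m := this
    _ = y := Nat.mod_eq_of_lt hy

lemma mns_pos' {n : ℕ} (hn : 1 ≤ n) {a : ℕ∞} (ha : 1 ≤ a) : 1 ≤ (min (n : ℕ∞) a).toNat := by
  have h1 : (1 : ℕ∞) ≤ min (n : ℕ∞) a := le_min (by exact_mod_cast hn) ha
  have h2 : min (n : ℕ∞) a ≠ ⊤ := ne_top_of_le_ne_top (ENat.coe_ne_top n) (min_le_left _ _)
  simpa using ENat.toNat_le_toNat h1 h2

lemma mns_le {n : ℕ} {a : ℕ∞} : (min (n : ℕ∞) a).toNat ≤ n := by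
  simpa using ENat.toNat_le_toNat (min_le_left (n : ℕ∞) a) (ENat.coe_ne_top n)

lemma nodup_fst_eq {α β : Type*} {l : List (α × β)} (h : (l.map Prod.fst).Nodup)
    {a : α} {b b' : β} (h1 : (a, b) ∈ l) (h2 : (a, b') ∈ l) : b = b' := by
  induction l with
  | nil => simp at h1
  | cons hd tl ih =>
    simp only [List.map_cons, List.nodup_cons] at h
    rcases List.mem_cons.mp h1 with e1 | h1' <;> rcases List.mem_cons.mp h2 with e2 | h2'
    · rw [← e1] at e2; exact (Prod.mk.injEq _ _ _ _ ▸ e2).2.symm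
    · exact absurd (List.mem_map.mpr ⟨(a, b'), h2', by rw [← e1]⟩) h.1
    · exact absurd (List.mem_map.mpr ⟨(a, b), h1', by rw [← e2]⟩) h.1
    · exact ih h.2 h1' h2'

end St10Helpers

namespace St10

variable (lg : ℤ_[2] → ℤ_[2]) (D : GraphData2)

/-- `min n (f s)` as a natural number. -/
def mns (n : ℕ) (s : D.Ω) : ℕ := (min (n : ℕ∞) (D.f s)).toNat

/-- The countable type of "abstract queries". -/
abbrev QT := Finset D.Ω × ℕ × ℕ × (D.Ω →₀ ℕ) × (D.Ω →₀ ℕ) × (D.Ω →₀ ℕ)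

/-- The translated value of `μ₂` in an abstract query. -/
def nu2 (n : ℕ) (c m₂ : D.Ω → ℕ) (s : D.Ω) : ℕ :=
  if D.f s = ⊤ then m₂ s else (inv2 (mns D n s) (c s) * m₂ s) % 2 ^ mns D n s

/-- Validity of an abstract query. -/
def Valid (S : Finset D.Ω) (n α : ℕ) (m₁ m₂ c : D.Ω → ℕ) : Prop :=
  D.v1 ∈ S ∧ D.v2 ∈ S ∧ 1 ≤ n ∧ α < 2 ^ n ∧ ¬ 2 ∣ α ∧
  (∀ s ∈ S, m₁ s < 2 ^ mns D n s) ∧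
  (∀ s ∈ S, m₂ s < 2 ^ mns D n s) ∧
  (n = 1 ↔ m₂ D.v2 % 2 = 1) ∧
  (2 ≤ n → m₂ D.v1 = logVal2 lg n ((α : ℕ) : ℤ_[2]) ∧ m₁ D.v1 = 0 ∧ m₁ D.v2 = 0) ∧
  (∀ s ∈ S, s ≠ D.v1 → s ≠ D.v2 → m₁ s % 2 = (m₂ s + D.lab D.v2 s * m₂ D.v2) % 2) ∧
  (∀ s ∈ S, D.f s ≠ ⊤ → c s < 2 ^ (D.f s).toNat ∧ ¬ 2 ∣ c s)

lemma step_exists (hD : D.IsRecip lg) (hW : D.IsWeaklyRado lg)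
    {S : Finset D.Ω} {n α : ℕ} {m₁ m₂ c : D.Ω → ℕ}
    (hq : Valid lg D S n α m₁ m₂ c) (A : Finset D.Ω) :
    ∃ vp : D.Ω × ℕ, vp.1 ∉ S ∧ vp.1 ∉ A ∧ D.f vp.1 = (n : ℕ∞) ∧ D.g vp.1 = α ∧
      vp.2 < 2 ^ n ∧ ¬ 2 ∣ vp.2 ∧
      ∀ s ∈ S, (vp.2 * D.lab vp.1 s) % 2 ^ mns D n s = m₁ s ∧
        D.lab s vp.1 = nu2 D n c m₂ s := by
  obtain ⟨⟨hcnt, hinf, hf1, hne, hfv1, hfv2, hfib, hg, hlabbd, hlv2l, hlv1l, hlz⟩, hrec⟩ := hD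
  obtain ⟨hv1S, hv2S, hn, hα, hαo, hb1, hb2, hp1, hlog, hp2, hc⟩ := hq
  have hmpos : ∀ s : D.Ω, 1 ≤ mns D n s := fun s => mns_pos' hn (hf1 s)
  set ν₁ : D.Ω → ℕ := fun s => if s ∈ S then m₁ s else D.lab D.v2 s * m₂ D.v2 % 2 with hν₁
  set ν₂ : D.Ω → ℕ := fun s => if s ∈ S then nu2 D n c m₂ s else 0 with hν₂
  have hB1 : ∀ s ∈ S ∪ A, ν₁ s < 2 ^ (min (n : ℕ∞) (D.f s)).toNat := by
    intro s _
    by_cases h : s ∈ S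
    · simpa [hν₁, h, mns] using hb1 s h
    · simp only [hν₁, h, if_neg, if_false]
      calc D.lab D.v2 s * m₂ D.v2 % 2 < 2 := Nat.mod_lt _ (by norm_num)
        _ = 2 ^ 1 := (pow_one 2).symm
        _ ≤ 2 ^ (min (n : ℕ∞) (D.f s)).toNat := Nat.pow_le_pow_right (by norm_num) (hmpos s)
  have hB2 : ∀ s ∈ S ∪ A, ν₂ s < 2 ^ (min (n : ℕ∞) (D.f s)).toNat := by
    intro s _
    by_cases h : s ∈ S
    · by_cases hfs : D.f s = ⊤
      · have hmns : mns D n s = n := by simp [mns, hfs]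
        have := hb2 s h
        rw [hmns] at this
        simpa [hν₂, h, nu2, hfs] using this
      · simp only [hν₂, h, if_pos, nu2, hfs, if_neg, if_false]
        exact Nat.mod_lt _ (pow_pos (by norm_num) _)
    · simp only [hν₂, h, if_neg, if_false]
      exact pow_pos (by norm_num) _
  have hν₂v2 : ν₂ D.v2 = m₂ D.v2 := by simp [hν₂, hv2S, nu2, hfv2]
  have hν₂v1 : ν₂ D.v1 = m₂ D.v1 := by simp [hν₂, hv1S, nu2, hfv1]
  have hP1 : n = 1 ↔ ν₂ D.v2 % 2 = 1 := by rw [hν₂v2]; exact hp1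
  have hL : 2 ≤ n → ν₂ D.v1 = logVal2 lg n ((α : ℕ) : ℤ_[2]) ∧ ν₁ D.v1 = 0 ∧ ν₁ D.v2 = 0 := by
    intro h2
    obtain ⟨ha, hb, hcc⟩ := hlog h2
    exact ⟨by rw [hν₂v1]; exact ha, by simp [hν₁, hv1S, hb], by simp [hν₁, hv2S, hcc]⟩
  have hP2 : ∀ s ∈ S ∪ A, s ≠ D.v1 → s ≠ D.v2 →
      ν₁ s % 2 = (ν₂ s + D.lab D.v2 s * ν₂ D.v2) % 2 := by
    intro s _ hs1 hs2
    rw [hν₂v2]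
    have hfs : D.f s ≠ ⊤ := by
      intro h
      rcases hfib s h with h' | h'
      · exact hs1 h'
      · exact hs2 h'
    by_cases h : s ∈ S
    · have hmain := hp2 s h hs1 hs2
      have hcs := hc s h hfs
      have hpar : ν₂ s % 2 = m₂ s % 2 := by
        have hio : ¬ 2 ∣ inv2 (mns D n s) (c s) :=
          (inv2_spec (mns D n s) (c s) (hmpos s) hcs.2).2.1
        simp only [hν₂, h, if_pos, nu2, hfs, if_neg, if_false]
        exact parity_helper (m₂ s) (hmpos s) hio
      have hν₁s : ν₁ s = m₁ s := by simp [hν₁, h]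
      rw [hν₁s]
      omega
    · have hν₁s : ν₁ s = D.lab D.v2 s * m₂ D.v2 % 2 := by simp [hν₁, h]
      have hν₂s : ν₂ s = 0 := by simp [hν₂, h]
      rw [hν₁s, hν₂s]
      omega
  obtain ⟨v, hvS, γr, hγlt, hγodd, hfv, hgv, hlab⟩ :=
    hW (S ∪ A) (Finset.mem_union_left _ hv1S) (Finset.mem_union_left _ hv2S) n hn α hα hαo
      ν₁ ν₂ hB1 hB2 hP1 hL hP2
  obtain ⟨hilt, hiodd, himul⟩ := inv2_spec n γr hn hγodd
  refine ⟨(v, inv2 n γr), fun h => hvS (Finset.mem_union_left _ h),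
    fun h => hvS (Finset.mem_union_right _ h), hfv, hgv, hilt, hiodd, fun s hs => ?_⟩
  obtain ⟨hl1, hl2⟩ := hlab s (Finset.mem_union_left _ hs)
  constructor
  · have hν₁s : ν₁ s = m₁ s := by simp [hν₁, hs]
    rw [hl1, hν₁s]
    exact mod_helper (by rwa [mul_comm] at himul) mns_le (hb1 s hs)
  · rw [hl2]
    simp [hν₂, hs]

variable (hD : D.IsRecip lg) (hW : D.IsWeaklyRado lg)

/-- One step of the construction. -/
noncomputable def stepC (q : QT D) (A : Finset D.Ω) : List (D.Ω × ℕ) :=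
  if hq : Valid lg D q.1 q.2.1 q.2.2.1 ⇑q.2.2.2.1 ⇑q.2.2.2.2.1 ⇑q.2.2.2.2.2 then
    [(step_exists lg D hD hW hq A).choose]
  else []

variable (e : ℕ → QT D)

/-- The list of assignments made in the first `k` steps. -/
noncomputable def stateL : ℕ → List (D.Ω × ℕ)
  | 0 => []
  | k + 1 => stateL k ++ stepC lg D hD hW (e k)
      (((stateL k).map Prod.fst).toFinset)

lemma mem_stepC {q : QT D} {A : Finset D.Ω} {p : D.Ω × ℕ}
    (hp : p ∈ stepC lg D hD hW q A) :
    p.1 ∉ q.1 ∧ p.1 ∉ A ∧ D.f p.1 = (q.2.1 : ℕ∞) ∧ D.g p.1 = q.2.2.1 ∧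
    p.2 < 2 ^ q.2.1 ∧ ¬ 2 ∣ p.2 ∧
    ∀ s ∈ q.1, (p.2 * D.lab p.1 s) % 2 ^ mns D q.2.1 s = q.2.2.2.1 s ∧
      D.lab s p.1 = nu2 D q.2.1 ⇑q.2.2.2.2.2 ⇑q.2.2.2.2.1 s := by
  unfold stepC at hp
  split at hp
  · next hq =>
    simp only [List.mem_singleton] at hp
    subst hp
    exact (step_exists lg D hD hW hq A).choose_spec
  · simp at hp

lemma stateL_mono {k k' : ℕ} (h : k ≤ k') {p : D.Ω × ℕ}
    (hp : p ∈ stateL lg D hD hW e k) : p ∈ stateL lg D hD hW e k' := by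
  induction k', h using Nat.le_induction with
  | base => exact hp
  | succ k' hk ih =>
    rw [stateL]
    exact List.mem_append.mpr (Or.inl ih)

lemma stateL_unit {k : ℕ} {p : D.Ω × ℕ} (hp : p ∈ stateL lg D hD hW e k) :
    D.f p.1 ≠ ⊤ ∧ p.2 < 2 ^ (D.f p.1).toNat ∧ ¬ 2 ∣ p.2 := by
  induction k with
  | zero => simp [stateL] at hp
  | succ k ih =>
    rw [stateL] at hp
    rcases List.mem_append.mp hp with h | h
    · exact ih h
    · obtain ⟨_, _, hfe, _, hlt, hodd, _⟩ := mem_stepC lg D hD hW h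
      refine ⟨by rw [hfe]; exact ENat.coe_ne_top _, ?_, hodd⟩
      rw [hfe]
      simpa using hlt

lemma stateL_nodup (k : ℕ) : ((stateL lg D hD hW e k).map Prod.fst).Nodup := by
  induction k with
  | zero => simp [stateL]
  | succ k ih =>
    rw [stateL, List.map_append]
    refine List.Nodup.append ih ?_ ?_
    · unfold stepC
      split <;> simp
    · intro a ha ha'
      obtain ⟨p, hp, rfl⟩ := List.mem_map.mp ha'
      exact (mem_stepC lg D hD hW hp).2.1 (List.mem_toFinset.mpr ha)

lemma stateL_uniq {k k' : ℕ} {v : D.Ω} {p p' : ℕ}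
    (h1 : (v, p) ∈ stateL lg D hD hW e k) (h2 : (v, p') ∈ stateL lg D hD hW e k') :
    p = p' := by
  have h1' := stateL_mono lg D hD hW e (le_max_left k k') h1
  have h2' := stateL_mono lg D hD hW e (le_max_right k k') h2
  exact nodup_fst_eq (stateL_nodup lg D hD hW e (max k k')) h1' h2'

/-- The final scaling function. -/
noncomputable def gammaF : D.Ω → ℕ := fun v =>
  if h : ∃ kp : ℕ × ℕ, (v, kp.2) ∈ stateL lg D hD hW e kp.1 then h.choose.2 else 1

lemma gammaF_eq {k : ℕ} {v : D.Ω} {p : ℕ} (h : (v, p) ∈ stateL lg D hD hW e k) :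
    gammaF lg D hD hW e v = p := by
  have hex : ∃ kp : ℕ × ℕ, (v, kp.2) ∈ stateL lg D hD hW e kp.1 := ⟨(k, p), h⟩
  rw [gammaF, dif_pos hex]
  exact stateL_uniq lg D hD hW e hex.choose_spec h

lemma gammaF_unit (v : D.Ω) (hv : D.f v ≠ ⊤) (hf1 : 1 ≤ D.f v) :
    gammaF lg D hD hW e v < 2 ^ (D.f v).toNat ∧ ¬ 2 ∣ gammaF lg D hD hW e v := by
  rw [gammaF]
  split
  · next h =>
    have := stateL_unit lg D hD hW e h.choose_spec
    exact ⟨this.2.1, this.2.2⟩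
  · have h1 : 1 ≤ (D.f v).toNat := by
      simpa using ENat.toNat_le_toNat hf1 hv
    refine ⟨?_, by norm_num⟩
    calc 1 < 2 ^ 1 := by norm_num
      _ ≤ 2 ^ (D.f v).toNat := Nat.pow_le_pow_right (by norm_num) h1

end St10

theorem statement10 (lg : ℤ_[2] → ℤ_[2]) (hlg : IsLogIso2 lg)
    (D : GraphData2) (hD : D.IsRecip lg) :
    D.IsRadoUpToScaling lg ↔ D.IsWeaklyRado lg := by
  obtain ⟨⟨hcnt, hinf, hf1, hne, hfv1, hfv2, hfib, hgu, hlabbd, hlv2l, hlv1l, hlz⟩, hrec⟩ := id hD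
  constructor
  · -- Rado up to scaling → weakly Rado
    rintro ⟨γ, hγu, hR⟩
    intro S hv1 hv2 n hn α hα hαo μ₁ μ₂ hb1 hb2 hp1 hlog hp2
    have hmpos : ∀ s : D.Ω, 1 ≤ (min (n : ℕ∞) (D.f s)).toNat := fun s => mns_pos' hn (hf1 s)
    set μ₂' : D.Ω → ℕ := fun s =>
      if D.f s = ⊤ then μ₂ s else (γ s * μ₂ s) % 2 ^ (min (n : ℕ∞) (D.f s)).toNat with hμ₂'
    have hμ₂'v2 : μ₂' D.v2 = μ₂ D.v2 := by simp [hμ₂', hfv2]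
    have hμ₂'v1 : μ₂' D.v1 = μ₂ D.v1 := by simp [hμ₂', hfv1]
    have hB2 : ∀ s ∈ S, μ₂' s < 2 ^ (min (n : ℕ∞) ((D.scale γ).f s)).toNat := by
      intro s hs
      show μ₂' s < 2 ^ (min (n : ℕ∞) (D.f s)).toNat
      by_cases hfs : D.f s = ⊤
      · simpa [hμ₂', hfs] using hb2 s hs
      · simp only [hμ₂', hfs, if_neg, if_false]
        exact Nat.mod_lt _ (pow_pos (by norm_num) _)
    have hArg3 : n = 1 ↔ μ₂' (D.scale γ).v2 % 2 = 1 := by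
      show n = 1 ↔ μ₂' D.v2 % 2 = 1
      rw [hμ₂'v2]; exact hp1
    have hArg4 : 2 ≤ n → μ₂' (D.scale γ).v1 = logVal2 lg n ((α : ℕ) : ℤ_[2]) ∧
        μ₁ (D.scale γ).v1 = 0 ∧ μ₁ (D.scale γ).v2 = 0 := by
      intro h2
      obtain ⟨a, b, c⟩ := hlog h2
      exact ⟨by show μ₂' D.v1 = _; rw [hμ₂'v1]; exact a, b, c⟩
    have hP2 : ∀ s ∈ S, s ≠ (D.scale γ).v1 → s ≠ (D.scale γ).v2 →
        μ₁ s % 2 = (μ₂' s + (D.scale γ).lab (D.scale γ).v2 s * μ₂' (D.scale γ).v2) % 2 := by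
      intro s hs hs1 hs2
      have hfs : D.f s ≠ ⊤ := by
        intro h
        rcases hfib s h with h' | h'
        · exact hs1 h'
        · exact hs2 h'
      have hmain := hp2 s hs hs1 hs2
      have hpar : μ₂' s % 2 = μ₂ s % 2 := by
        simp only [hμ₂', hfs, if_neg, if_false]
        exact parity_helper (μ₂ s) (hmpos s) (hγu s hfs).2
      have hsl : (D.scale γ).lab (D.scale γ).v2 s = D.lab D.v2 s := by
        show (if D.f D.v2 = ⊤ then D.lab D.v2 s else _) = D.lab D.v2 s
        rw [if_pos hfv2]
      rw [hsl]
      rw [show μ₂' (D.scale γ).v2 = μ₂ D.v2 from hμ₂'v2]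
      omega
    obtain ⟨v, hvS, hfv, hgv, hlab⟩ :=
      hR S hv1 hv2 n hn α hα hαo μ₁ μ₂' hb1 hB2 hArg3 hArg4 hP2
    have hfv' : D.f v = (n : ℕ∞) := hfv
    have hfvne : D.f v ≠ ⊤ := by rw [hfv']; exact ENat.coe_ne_top n
    have hγv : γ v < 2 ^ n ∧ ¬ 2 ∣ γ v := by
      have := hγu v hfvne
      rwa [hfv', ENat.toNat_coe] at this
    obtain ⟨hilt, hiodd, himul⟩ := inv2_spec n (γ v) hn hγv.2
    refine ⟨v, hvS, inv2 n (γ v), hilt, hiodd, hfv, hgv, fun s hs => ⟨?_, ?_⟩⟩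
    · have h1 : (γ v * D.lab v s) % 2 ^ (D.fm v s) = μ₁ s := by
        have h := (hlab s hs).1
        rw [show (D.scale γ).lab v s =
          (if D.f v = ⊤ then D.lab v s else (γ v * D.lab v s) % 2 ^ D.fm v s) from rfl] at h
        rwa [if_neg hfvne] at h
      have hfm : D.fm v s = (min (n : ℕ∞) (D.f s)).toNat := by
        show (min (D.f v) (D.f s)).toNat = _; rw [hfv']
      have hlbd : D.lab v s < 2 ^ (min (n : ℕ∞) (D.f s)).toNat := by
        have := hlabbd v s ⟨fun h => hvS (h ▸ hs), fun h => hfvne h.1⟩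
        change _ < 2 ^ (min (D.f v) (D.f s)).toNat at this; rwa [hfv'] at this
      rw [hfm] at h1
      rw [← h1]
      exact (mod_helper (by rwa [mul_comm] at himul) mns_le hlbd).symm
    · have h2 := (hlab s hs).2
      by_cases hfs : D.f s = ⊤
      · rw [show (D.scale γ).lab s v = (if D.f s = ⊤ then D.lab s v
          else (γ s * D.lab s v) % 2 ^ D.fm s v) from rfl, if_pos hfs] at h2
        rw [h2]
        simp [hμ₂', hfs]
      · rw [show (D.scale γ).lab s v = (if D.f s = ⊤ then D.lab s v
          else (γ s * D.lab s v) % 2 ^ D.fm s v) from rfl, if_neg hfs] at h2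
        have hfm : D.fm s v = (min (n : ℕ∞) (D.f s)).toNat := by
          show (min (D.f s) (D.f v)).toNat = _; rw [hfv', min_comm]
        rw [hfm] at h2
        have hμ₂'s : μ₂' s = (γ s * μ₂ s) % 2 ^ (min (n : ℕ∞) (D.f s)).toNat := by
          simp [hμ₂', hfs]
        rw [hμ₂'s] at h2
        have hlbd : D.lab s v < 2 ^ (min (n : ℕ∞) (D.f s)).toNat := by
          have := hlabbd s v ⟨fun h => hvS (h ▸ hs), fun h => hfvne h.2⟩
          change _ < 2 ^ (min (D.f s) (D.f v)).toNat at this; rwa [hfv', min_comm] at this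
        exact cancel_helper (hγu s hfs).2 hlbd (hb2 s hs) h2
  · -- weakly Rado → Rado up to scaling
    intro hW
    haveI : Countable D.Ω := hcnt
    haveI : Infinite D.Ω := hinf
    obtain ⟨e, he⟩ := exists_surjective_nat (St10.QT D)
    set γ := St10.gammaF lg D hD hW e with hγdef
    have hγu : ∀ v, D.f v ≠ ⊤ → γ v < 2 ^ (D.f v).toNat ∧ ¬ 2 ∣ γ v := fun v hv =>
      St10.gammaF_unit lg D hD hW e v hv (hf1 v)
    refine ⟨γ, hγu, ?_⟩
    intro S hv1 hv2 n hn α hα hαo μ₁ μ₂ hb1 hb2 hp1 hlog hp2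
    have hmpos : ∀ s : D.Ω, 1 ≤ St10.mns D n s := fun s => mns_pos' hn (hf1 s)
    set m₁f : D.Ω →₀ ℕ := Finsupp.indicator S (fun s _ => μ₁ s) with hm₁f
    set m₂f : D.Ω →₀ ℕ := Finsupp.indicator S (fun s _ => μ₂ s) with hm₂f
    set cf : D.Ω →₀ ℕ := Finsupp.indicator S (fun s _ => γ s) with hcf
    have e₁ : ∀ s ∈ S, m₁f s = μ₁ s := fun s hs => Finsupp.indicator_of_mem hs _
    have e₂ : ∀ s ∈ S, m₂f s = μ₂ s := fun s hs => Finsupp.indicator_of_mem hs _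
    have e₃ : ∀ s ∈ S, cf s = γ s := fun s hs => Finsupp.indicator_of_mem hs _
    have hVq : St10.Valid lg D S n α ⇑m₁f ⇑m₂f ⇑cf := by
      refine ⟨hv1, hv2, hn, hα, hαo, ?_, ?_, ?_, ?_, ?_, ?_⟩
      · intro s hs; rw [e₁ s hs]; exact hb1 s hs
      · intro s hs; rw [e₂ s hs]; exact hb2 s hs
      · rw [e₂ D.v2 hv2]; exact hp1
      · intro h2
        obtain ⟨a, b, c⟩ := hlog h2
        exact ⟨by rw [e₂ D.v1 hv1]; exact a, by rw [e₁ D.v1 hv1]; exact b,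
          by rw [e₁ D.v2 hv2]; exact c⟩
      · intro s hs hs1 hs2
        have hmain := hp2 s hs hs1 hs2
        have hsl : (D.scale γ).lab (D.scale γ).v2 s = D.lab D.v2 s := by
          show (if D.f D.v2 = ⊤ then D.lab D.v2 s else _) = D.lab D.v2 s
          rw [if_pos hfv2]
        rw [hsl] at hmain
        rw [e₁ s hs, e₂ s hs, e₂ D.v2 hv2]
        exact hmain
      · intro s hs hfs
        rw [e₃ s hs]
        exact hγu s hfs
    obtain ⟨k, hk⟩ := he (S, n, α, m₁f, m₂f, cf)
    have hVq' : St10.Valid lg D (e k).1 (e k).2.1 (e k).2.2.1 ⇑(e k).2.2.2.1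
        ⇑(e k).2.2.2.2.1 ⇑(e k).2.2.2.2.2 := by rw [hk]; exact hVq
    set A := ((St10.stateL lg D hD hW e k).map Prod.fst).toFinset with hA
    set vp := (St10.step_exists lg D hD hW hVq' A).choose with hvp
    have hmem : vp ∈ St10.stateL lg D hD hW e (k + 1) := by
      rw [St10.stateL]
      refine List.mem_append.mpr (Or.inr ?_)
      rw [St10.stepC, dif_pos hVq', ← hA]
      exact List.mem_singleton.mpr hvp
    have hγv : γ vp.1 = vp.2 := by
      rw [← Prod.mk.eta (p := vp)] at hmem
      exact St10.gammaF_eq lg D hD hW e hmem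
    obtain ⟨hnotS, hnotA, hfv, hgv, hplt, hpodd, hlabs⟩ :=
      (St10.step_exists lg D hD hW hVq' A).choose_spec
    rw [← hvp] at hnotS hnotA hfv hgv hplt hpodd hlabs
    simp only [hk] at hnotS hfv hgv hlabs
    refine ⟨vp.1, hnotS, hfv, hgv, fun s hs => ⟨?_, ?_⟩⟩
    · have hfvne : D.f vp.1 ≠ ⊤ := by rw [hfv]; exact ENat.coe_ne_top n
      have hfm : D.fm vp.1 s = St10.mns D n s := by
        show (min (D.f vp.1) (D.f s)).toNat = (min (n : ℕ∞) (D.f s)).toNat; rw [hfv]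
      have h1 := (hlabs s hs).1
      show (if D.f vp.1 = ⊤ then D.lab vp.1 s
        else (γ vp.1 * D.lab vp.1 s) % 2 ^ D.fm vp.1 s) = μ₁ s
      rw [if_neg hfvne, hγv, hfm, h1, e₁ s hs]
    · have hfvne : D.f vp.1 ≠ ⊤ := by rw [hfv]; exact ENat.coe_ne_top n
      have h2 := (hlabs s hs).2
      show (if D.f s = ⊤ then D.lab s vp.1
        else (γ s * D.lab s vp.1) % 2 ^ D.fm s vp.1) = μ₂ s
      by_cases hfs : D.f s = ⊤
      · rw [if_pos hfs, h2]
        simp only [St10.nu2, if_pos hfs]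
        exact e₂ s hs
      · have hfm : D.fm s vp.1 = St10.mns D n s := by
          show (min (D.f s) (D.f vp.1)).toNat = (min (n : ℕ∞) (D.f s)).toNat; rw [hfv, min_comm]
        rw [if_neg hfs, hfm, h2]
        simp only [St10.nu2, if_neg hfs]
        rw [e₃ s hs, e₂ s hs]
        obtain ⟨_, _, hm⟩ := inv2_spec (St10.mns D n s) (γ s) (hmpos s) (hγu s hfs).2
        exact mod_helper hm le_rfl (hb2 s hs)
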